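/- Fix λ > 0 and let x be a BA fixed point. Let ψ : [0,∞) → [0,∞) be increasing and Lipschitz-continuous with ψ(0) = 0, and let y : [0,∞) → ℝ be twice continuously differentiable with y''(t) − y'(t) + ψ(y(t)) = 0, y(0) = 0 and y'(0) > 0. Define T = inf{t ≥ 0 : (y(t), y'(t)) ∉ [0,∞)²}, T₊ = inf{t ≥ 0 : y'(t) ≥ λ}, and T₋ = inf{t > 0 : y'(t) = φ_λ(y(t))}. Then: (i) if T₊ < T, T₊ < ∞, and φ_λ(s) ≤ ψ(s) for all s ≥ 0, then y'(0) ≥ x'(0); (ii) if T₋ < T, T₋ < ∞, and ψ(s) ≤ φ_λ(s) for all s ≥ 0, then x'(0) ≥ y'(0). -/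

import Mathlib

open MeasureTheory ENNReal

/-- φ_λ(y) = λ(1 − e^{−y}). -/
noncomputable def baPhi (lam y : ℝ) : ℝ := lam * (1 - Real.exp (-y))

/-- A BA fixed point: x : [0,∞) → [0,∞) with x(0) = 0, subexponential decay
`e^{-as} x(s) → 0` for every a > 0, x not identically 0, and
x(t) = ∫₀ᵗ e^u (∫_u^∞ φ_λ(x(s)) e^{−s} ds) du for all t ≥ 0. -/
def IsBAFixedPoint (lam : ℝ) (x : ℝ → ℝ) : Prop :=
  (∀ t, 0 ≤ t → 0 ≤ x t) ∧
  x 0 = 0 ∧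
  (∀ a : ℝ, 0 < a →
    Filter.Tendsto (fun s => Real.exp (-(a * s)) * x s) Filter.atTop (nhds 0)) ∧
  (∃ t, 0 ≤ t ∧ x t ≠ 0) ∧
  (∀ t, 0 ≤ t →
    x t = ∫ u in (0:ℝ)..t, Real.exp u * ∫ s in Set.Ioi u, baPhi lam (x s) * Real.exp (-s))

/-- Infimum of a set of (nonnegative) reals as an extended nonnegative real;
the infimum of the empty set is +∞. -/
noncomputable def exitInf (S : Set ℝ) : ℝ≥0∞ :=
  ⨅ (t : S), ENNReal.ofReal (t : ℝ)

open Set Filter Topology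

namespace BAaux

/-! ### Elementary facts about `baPhi` -/

theorem phi_nonneg {lam v : ℝ} (hlam : 0 ≤ lam) (hv : 0 ≤ v) : 0 ≤ baPhi lam v := by
  have : Real.exp (-v) ≤ 1 := Real.exp_le_one_iff.2 (by linarith)
  have : 0 ≤ 1 - Real.exp (-v) := by linarith
  exact mul_nonneg hlam this

theorem phi_lt_lam {lam : ℝ} (hlam : 0 < lam) (v : ℝ) : baPhi lam v < lam := by
  have h : 0 < Real.exp (-v) := Real.exp_pos _
  have : 1 - Real.exp (-v) < 1 := by linarith
  calc baPhi lam v < lam * 1 := by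
        exact mul_lt_mul_of_pos_left this hlam
    _ = lam := mul_one lam

theorem phi_strictMono {lam : ℝ} (hlam : 0 < lam) : StrictMono (baPhi lam) := by
  intro a b hab
  have : Real.exp (-b) < Real.exp (-a) := Real.exp_lt_exp.2 (by linarith)
  have : 1 - Real.exp (-a) < 1 - Real.exp (-b) := by linarith
  exact mul_lt_mul_of_pos_left this hlam

theorem phi_zero (lam : ℝ) : baPhi lam 0 = 0 := by simp [baPhi]

theorem phi_mono {lam : ℝ} (hlam : 0 < lam) : Monotone (baPhi lam) :=
  (phi_strictMono hlam).monotone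

theorem phi_pos {lam v : ℝ} (hlam : 0 < lam) (hv : 0 < v) : 0 < baPhi lam v := by
  have := (phi_strictMono hlam) hv
  rwa [phi_zero] at this

/-! ### The building blocks for the fixed point -/

noncomputable def baF (lam : ℝ) (x : ℝ → ℝ) : ℝ → ℝ := fun s => baPhi lam (x s) * Real.exp (-s)

noncomputable def baFp (lam : ℝ) (x : ℝ → ℝ) : ℝ → ℝ := fun s => if 0 ≤ s then baF lam x s else 0

noncomputable def baC (lam : ℝ) (x : ℝ → ℝ) : ℝ := ∫ s in Set.Ioi (0:ℝ), baF lam x s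

noncomputable def baXD (lam : ℝ) (x : ℝ → ℝ) : ℝ → ℝ :=
  fun t => Real.exp t * (baC lam x - ∫ s in (0:ℝ)..t, baFp lam x s)

noncomputable def baXD2 (lam : ℝ) (x : ℝ → ℝ) : ℝ → ℝ := fun t => baXD lam x (max t 0)

noncomputable def baX (lam : ℝ) (x : ℝ → ℝ) : ℝ → ℝ := fun t => ∫ u in (0:ℝ)..t, baXD2 lam x u

section withfp

variable {lam : ℝ} {x : ℝ → ℝ}

theorem baF_nonneg (hlam : 0 < lam) (hx : IsBAFixedPoint lam x) {s : ℝ} (hs : 0 ≤ s) :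
    0 ≤ baF lam x s :=
  mul_nonneg (phi_nonneg hlam.le (hx.1 s hs)) (Real.exp_pos _).le

theorem baF_le (hlam : 0 < lam) (hx : IsBAFixedPoint lam x) (s : ℝ) :
    baF lam x s ≤ lam * Real.exp (-s) :=
  mul_le_mul_of_nonneg_right (phi_lt_lam hlam _).le (Real.exp_pos _).le

/-- integrable majorant -/
theorem majorant_integrableOn (lam u : ℝ) :
    IntegrableOn (fun s => lam * Real.exp (-s)) (Set.Ioi u) volume := by
  have h := exp_neg_integrableOn_Ioi u (one_pos (α := ℝ))
  simp only [neg_mul, one_mul] at h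
  exact h.const_mul lam

/-- if integrable on every `Ioi v`, `v > u ≥ 0`, then integrable on `Ioi u`. -/
theorem integrableOn_of_forall_gt (hlam : 0 < lam) (hx : IsBAFixedPoint lam x) {u : ℝ}
    (hu : 0 ≤ u) (h : ∀ v, u < v → IntegrableOn (baF lam x) (Set.Ioi v) volume) :
    IntegrableOn (baF lam x) (Set.Ioi u) volume := by
  have hun : Set.Ioi u = ⋃ n : ℕ, Set.Ioi (u + 1 / (n + 1)) := by
    ext s
    simp only [Set.mem_Ioi, Set.mem_iUnion]
    constructor
    · intro hs
      obtain ⟨n, hn⟩ := exists_nat_one_div_lt (show 0 < s - u by linarith)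
      exact ⟨n, by linarith⟩
    · rintro ⟨n, hn⟩
      have : (0:ℝ) < 1 / (n + 1) := by positivity
      linarith
  have hmeas : AEStronglyMeasurable (baF lam x) (volume.restrict (Set.Ioi u)) := by
    rw [hun]
    rw [aestronglyMeasurable_iUnion_iff]
    intro n
    have : (0:ℝ) < 1 / (n + 1) := by positivity
    exact (h _ (by linarith)).aestronglyMeasurable
  refine Integrable.mono' (majorant_integrableOn lam u) hmeas ?_
  refine (ae_restrict_iff' measurableSet_Ioi).2 (Filter.Eventually.of_forall fun s hs => ?_)
  have hs0 : 0 ≤ s := le_trans hu (le_of_lt hs)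
  rw [Real.norm_eq_abs, abs_of_nonneg (baF_nonneg hlam hx hs0)]
  exact baF_le hlam hx s

end withfp

end BAaux

namespace BAaux

variable {lam : ℝ} {x : ℝ → ℝ}

theorem integrableOn_baF (hlam : 0 < lam) (hx : IsBAFixedPoint lam x) :
    ∀ u, 0 ≤ u → IntegrableOn (baF lam x) (Set.Ioi u) volume := by
  by_contra hbad
  push_neg at hbad
  obtain ⟨u, hu, hnint⟩ := hbad
  set S : Set ℝ := {v : ℝ | IntegrableOn (baF lam x) (Set.Ioi v) volume} with hS
  have hup : ∀ v ∈ S, ∀ w, v ≤ w → w ∈ S := fun v hv w hvw =>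
    hv.mono_set (Set.Ioi_subset_Ioi hvw)
  have huS : u ∉ S := hnint
  by_cases hne : S.Nonempty
  · -- the infimum of S
    have hlb : ∀ v ∈ S, u ≤ v := by
      intro v hv
      by_contra hlt
      exact huS (hup v hv u (le_of_not_ge hlt))
    have hbdd : BddBelow S := ⟨u, hlb⟩
    set u₀ := sInf S with hu₀
    have hu₀u : u ≤ u₀ := le_csInf hne hlb
    have hu₀0 : 0 ≤ u₀ := le_trans hu hu₀u
    have hu₀S : u₀ ∈ S := by
      refine integrableOn_of_forall_gt hlam hx hu₀0 fun v hv => ?_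
      obtain ⟨w, hwS, hwv⟩ := exists_lt_of_csInf_lt hne hv
      exact hup w hwS v hwv.le
    have huu₀ : u < u₀ := lt_of_le_of_ne hu₀u (by rintro rfl; exact huS hu₀S)
    -- tails below u₀ are junk
    have hjunk : ∀ v, v < u₀ → (∫ s in Set.Ioi v, baF lam x s) = 0 := by
      intro v hv
      have : v ∉ S := fun hmem => absurd (csInf_le hbdd hmem) (not_le.2 hv)
      exact integral_undef this
    -- x vanishes on [0, u₀]
    have hx0 : ∀ t ∈ Set.Icc 0 u₀, x t = 0 := by
      intro t ht
      rw [hx.2.2.2.2 t ht.1]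
      have hae : ∀ᵐ w : ℝ ∂volume, w ≠ u₀ := by
        rw [MeasureTheory.ae_iff]
        simpa [Set.setOf_eq_eq_singleton] using Real.volume_singleton (x := u₀)
      rw [intervalIntegral.integral_congr_ae (g := fun _ => (0:ℝ)) ?_]
      · simp
      · filter_upwards [hae] with w hwne hw
        rw [Set.uIoc_of_le ht.1] at hw
        have hwlt : w < u₀ := lt_of_le_of_ne (le_trans hw.2 ht.2) hwne
        have := hjunk w hwlt
        simp only [baF] at this
        rw [this, mul_zero]
    -- hence baF vanishes on (u, u₀]
    have hF0 : Set.EqOn (baF lam x) (fun _ => (0:ℝ)) (Set.Ioc u u₀) := by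
      intro s hs
      have : x s = 0 := hx0 s ⟨le_trans hu hs.1.le, hs.2⟩
      simp [baF, this, phi_zero]
    have h1 : IntegrableOn (baF lam x) (Set.Ioc u u₀) volume :=
      (integrableOn_zero (ε' := ℝ)).congr_fun (fun s hs => (hF0 hs).symm) measurableSet_Ioc
    have h2 : IntegrableOn (baF lam x) (Set.Ioi u) volume := by
      rw [← Set.Ioc_union_Ioi_eq_Ioi huu₀.le]
      exact h1.union hu₀S
    exact huS h2
  · -- S empty : all tails junk, x ≡ 0 on [0,∞)
    have hjunk : ∀ v : ℝ, (∫ s in Set.Ioi v, baF lam x s) = 0 := by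
      intro v
      refine integral_undef fun hmem => hne ⟨v, hmem⟩
    obtain ⟨t₀, ht₀, hxt₀⟩ := hx.2.2.2.1
    apply hxt₀
    rw [hx.2.2.2.2 t₀ ht₀]
    simp only [baF] at hjunk
    rw [intervalIntegral.integral_congr (g := fun _ => (0:ℝ)) fun w _ => by
      rw [hjunk w, mul_zero]]
    simp

end BAaux

namespace BAaux

variable {lam : ℝ} {x : ℝ → ℝ}

theorem baFp_eq_indicator : baFp lam x = Set.indicator (Set.Ici 0) (baF lam x) := by
  funext s
  simp [baFp, Set.indicator_apply, Set.mem_Ici]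

theorem baFp_integrable (hlam : 0 < lam) (hx : IsBAFixedPoint lam x) :
    Integrable (baFp lam x) volume := by
  rw [baFp_eq_indicator]
  refine (IntegrableOn.integrable_indicator ?_ measurableSet_Ici)
  rw [integrableOn_Ici_iff_integrableOn_Ioi]
  exact integrableOn_baF hlam hx 0 le_rfl

theorem tail_eq (hlam : 0 < lam) (hx : IsBAFixedPoint lam x) {t : ℝ} (ht : 0 ≤ t) :
    (∫ s in Set.Ioi t, baF lam x s) = baC lam x - ∫ s in (0:ℝ)..t, baFp lam x s := by
  have h1 : (∫ s in (0:ℝ)..t, baFp lam x s) = ∫ s in Set.Ioc 0 t, baF lam x s := by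
    rw [intervalIntegral.integral_of_le ht]
    refine setIntegral_congr_fun measurableSet_Ioc fun s hs => ?_
    simp [baFp, hs.1.le]
  have h2 : baC lam x = (∫ s in Set.Ioc 0 t, baF lam x s) + ∫ s in Set.Ioi t, baF lam x s := by
    rw [baC, ← Set.Ioc_union_Ioi_eq_Ioi ht]
    exact setIntegral_union Set.Ioc_disjoint_Ioi_same measurableSet_Ioi
      ((integrableOn_baF hlam hx 0 le_rfl).mono_set Set.Ioc_subset_Ioi_self)
      (integrableOn_baF hlam hx t ht)
  rw [h1, h2]; ring

theorem XD_eq_tail (hlam : 0 < lam) (hx : IsBAFixedPoint lam x) {t : ℝ} (ht : 0 ≤ t) :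
    baXD lam x t = Real.exp t * ∫ s in Set.Ioi t, baF lam x s := by
  rw [baXD, tail_eq hlam hx ht]

theorem continuous_baXD2 (hlam : 0 < lam) (hx : IsBAFixedPoint lam x) :
    Continuous (baXD2 lam x) := by
  have hP : Continuous fun t => ∫ s in (0:ℝ)..t, baFp lam x s :=
    (baFp_integrable hlam hx).continuous_primitive 0
  have hXD : Continuous (baXD lam x) :=
    Real.continuous_exp.mul (continuous_const.sub hP)
  exact hXD.comp (continuous_id.max continuous_const)

theorem hasDerivAt_baX (hlam : 0 < lam) (hx : IsBAFixedPoint lam x) (t : ℝ) :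
    HasDerivAt (baX lam x) (baXD2 lam x t) t := by
  have hc := continuous_baXD2 hlam hx
  exact intervalIntegral.integral_hasDerivAt_right (hc.intervalIntegrable 0 t)
    (hc.stronglyMeasurableAtFilter volume _) hc.continuousAt

theorem x_eq_baX (hlam : 0 < lam) (hx : IsBAFixedPoint lam x) {t : ℝ} (ht : 0 ≤ t) :
    x t = baX lam x t := by
  rw [hx.2.2.2.2 t ht, baX]
  refine intervalIntegral.integral_congr fun u hu => ?_
  rw [Set.uIcc_of_le ht] at hu
  have hu0 : 0 ≤ u := hu.1
  rw [baXD2, max_eq_left hu0, XD_eq_tail hlam hx hu0]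
  simp [baF]

theorem tail_nonneg (hlam : 0 < lam) (hx : IsBAFixedPoint lam x) {t : ℝ} (ht : 0 ≤ t) :
    0 ≤ ∫ s in Set.Ioi t, baF lam x s := by
  refine setIntegral_nonneg measurableSet_Ioi fun s hs => ?_
  exact baF_nonneg hlam hx (le_trans ht (le_of_lt hs))

theorem baXD2_nonneg (hlam : 0 < lam) (hx : IsBAFixedPoint lam x) (t : ℝ) :
    0 ≤ baXD2 lam x t := by
  rw [baXD2, XD_eq_tail hlam hx (le_max_right t 0)]
  exact mul_nonneg (Real.exp_pos _).le (tail_nonneg hlam hx (le_max_right t 0))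

theorem baX_monotone (hlam : 0 < lam) (hx : IsBAFixedPoint lam x) : Monotone (baX lam x) := by
  refine monotone_of_deriv_nonneg (fun t => (hasDerivAt_baX hlam hx t).differentiableAt) fun t => ?_
  rw [(hasDerivAt_baX hlam hx t).deriv]
  exact baXD2_nonneg hlam hx t

end BAaux

namespace BAaux

variable {lam : ℝ} {x : ℝ → ℝ}

theorem tail_pos (hlam : 0 < lam) (hx : IsBAFixedPoint lam x) {t : ℝ} (ht : 0 ≤ t) :
    0 < ∫ s in Set.Ioi t, baF lam x s := by
  by_contra hcon
  have h0 : (∫ s in Set.Ioi t, baF lam x s) = 0 :=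
    le_antisymm (not_lt.1 hcon) (tail_nonneg hlam hx ht)
  have hnonneg : 0 ≤ᵐ[volume.restrict (Set.Ioi t)] baF lam x :=
    (ae_restrict_iff' measurableSet_Ioi).2 (Filter.Eventually.of_forall fun s hs =>
      baF_nonneg hlam hx (le_trans ht hs.le))
  have hae : baF lam x =ᵐ[volume.restrict (Set.Ioi t)] 0 :=
    (integral_eq_zero_iff_of_nonneg_ae hnonneg (integrableOn_baF hlam hx t ht)).1 h0
  have htail0 : ∀ u, t ≤ u → (∫ s in Set.Ioi u, baF lam x s) = 0 := by
    intro u hu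
    have : baF lam x =ᵐ[volume.restrict (Set.Ioi u)] 0 :=
      ae_restrict_of_ae_restrict_of_subset (Set.Ioi_subset_Ioi hu) hae
    exact integral_eq_zero_of_ae this
  have hXD0 : ∀ u, t ≤ u → baXD2 lam x u = 0 := by
    intro u hu
    have hu0 : 0 ≤ u := le_trans ht hu
    rw [baXD2, max_eq_left hu0, XD_eq_tail hlam hx hu0, htail0 u hu, mul_zero]
  have hxconst : ∀ s, t ≤ s → x s = x t := by
    intro s hs
    have hs0 : 0 ≤ s := le_trans ht hs
    rw [x_eq_baX hlam hx hs0, x_eq_baX hlam hx ht]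
    have hint : ∀ a b : ℝ, IntervalIntegrable (baXD2 lam x) volume a b :=
      fun a b => (continuous_baXD2 hlam hx).intervalIntegrable a b
    have hsub : baX lam x s - baX lam x t = ∫ u in t..s, baXD2 lam x u := by
      rw [baX, baX]
      exact intervalIntegral.integral_interval_sub_left (hint 0 s) (hint 0 t)
    have hz : (∫ u in t..s, baXD2 lam x u) = 0 := by
      rw [intervalIntegral.integral_congr (g := fun _ => (0:ℝ)) fun u hu => ?_]
      · simp
      · rw [Set.uIcc_of_le hs] at hu
        exact hXD0 u hu.1
    linarith [hsub, hz]
  rcases eq_or_lt_of_le (hx.1 t ht) with hM | hM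
  · -- x t = 0 : x vanishes identically on [0,∞)
    obtain ⟨t₀, ht₀, hxt₀⟩ := hx.2.2.2.1
    apply hxt₀
    rcases le_total t t₀ with h | h
    · rw [hxconst t₀ h, ← hM]
    · have h1 : baX lam x t₀ ≤ baX lam x t := baX_monotone hlam hx h
      rw [← x_eq_baX hlam hx ht₀, ← x_eq_baX hlam hx ht, ← hM] at h1
      exact le_antisymm h1 (hx.1 t₀ ht₀)
  · -- x t > 0 : the tail integral is positive, contradiction
    have hpos : ∀ s, s ∈ Set.Ioi t → 0 < baF lam x s := by
      intro s hs
      have : x s = x t := hxconst s hs.le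
      rw [baF, this]
      exact mul_pos (phi_pos hlam hM) (Real.exp_pos _)
    have : 0 < ∫ s in Set.Ioi t, baF lam x s := by
      rw [setIntegral_pos_iff_support_of_nonneg_ae hnonneg (integrableOn_baF hlam hx t ht)]
      have hsub : Set.Ioi t ⊆ Function.support (baF lam x) ∩ Set.Ioi t :=
        fun s hs => ⟨ne_of_gt (hpos s hs), hs⟩
      calc (0:ℝ≥0∞) < ⊤ := by simp
        _ = volume (Set.Ioi t) := Real.volume_Ioi.symm
        _ ≤ volume (Function.support (baF lam x) ∩ Set.Ioi t) := measure_mono hsub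
    linarith [h0, this]

end BAaux

namespace BAaux

variable {lam : ℝ} {x : ℝ → ℝ}

theorem baXD2_pos (hlam : 0 < lam) (hx : IsBAFixedPoint lam x) (t : ℝ) :
    0 < baXD2 lam x t := by
  rw [baXD2, XD_eq_tail hlam hx (le_max_right t 0)]
  exact mul_pos (Real.exp_pos _) (tail_pos hlam hx (le_max_right t 0))

theorem baXD_pos (hlam : 0 < lam) (hx : IsBAFixedPoint lam x) {t : ℝ} (ht : 0 ≤ t) :
    0 < baXD lam x t := by
  have := baXD2_pos hlam hx t
  rwa [baXD2, max_eq_left ht] at this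

theorem baX_strictMono (hlam : 0 < lam) (hx : IsBAFixedPoint lam x) :
    StrictMono (baX lam x) := by
  refine strictMono_of_deriv_pos fun t => ?_
  rw [(hasDerivAt_baX hlam hx t).deriv]
  exact baXD2_pos hlam hx t

/-- a strict integral comparison helper on `Ioi t` -/
theorem setIntegral_lt_setIntegral {t : ℝ} {f g : ℝ → ℝ}
    (hf : IntegrableOn f (Set.Ioi t) volume) (hg : IntegrableOn g (Set.Ioi t) volume)
    (hlt : ∀ s ∈ Set.Ioi t, f s < g s) :
    (∫ s in Set.Ioi t, f s) < ∫ s in Set.Ioi t, g s := by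
  have hd : 0 < ∫ s in Set.Ioi t, (g s - f s) := by
    have hnonneg : 0 ≤ᵐ[volume.restrict (Set.Ioi t)] fun s => g s - f s :=
      (ae_restrict_iff' measurableSet_Ioi).2 (Filter.Eventually.of_forall fun s hs => by
        have := hlt s hs; simp; linarith)
    rw [setIntegral_pos_iff_support_of_nonneg_ae hnonneg (hg.sub hf)]
    have hsub : Set.Ioi t ⊆ Function.support (fun s => g s - f s) ∩ Set.Ioi t :=
      fun s hs => ⟨by have := hlt s hs; simp; linarith, hs⟩
    calc (0:ℝ≥0∞) < ⊤ := by simp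
      _ = volume (Set.Ioi t) := Real.volume_Ioi.symm
      _ ≤ _ := measure_mono hsub
  have := integral_sub hg hf
  rw [this] at hd
  linarith

theorem exp_tail_integral (a t : ℝ) :
    (∫ s in Set.Ioi t, a * Real.exp (-s)) = a * Real.exp (-t) := by
  rw [integral_const_mul, integral_exp_neg_Ioi]

theorem exp_tail_integrable (a t : ℝ) :
    IntegrableOn (fun s => a * Real.exp (-s)) (Set.Ioi t) volume := by
  have h := exp_neg_integrableOn_Ioi t (one_pos (α := ℝ))
  simp only [neg_mul, one_mul] at h
  exact h.const_mul a

theorem baXD_lt_lam (hlam : 0 < lam) (hx : IsBAFixedPoint lam x) {t : ℝ} (ht : 0 ≤ t) :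
    baXD lam x t < lam := by
  rw [XD_eq_tail hlam hx ht]
  have h := setIntegral_lt_setIntegral (integrableOn_baF hlam hx t ht)
    (exp_tail_integrable lam t) (fun s _ => by
      exact mul_lt_mul_of_pos_right (phi_lt_lam hlam _) (Real.exp_pos _))
  rw [exp_tail_integral] at h
  calc Real.exp t * ∫ s in Set.Ioi t, baF lam x s
      < Real.exp t * (lam * Real.exp (-t)) :=
        mul_lt_mul_of_pos_left h (Real.exp_pos _)
    _ = lam * (Real.exp t * Real.exp (-t)) := by ring
    _ = lam := by rw [← Real.exp_add]; simp

theorem phi_lt_baXD (hlam : 0 < lam) (hx : IsBAFixedPoint lam x) {t : ℝ} (ht : 0 ≤ t) :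
    baPhi lam (baX lam x t) < baXD lam x t := by
  rw [XD_eq_tail hlam hx ht]
  have h := setIntegral_lt_setIntegral (f := fun s => baPhi lam (baX lam x t) * Real.exp (-s))
    (exp_tail_integrable _ t) (integrableOn_baF hlam hx t ht) (fun s hs => by
      have hs0 : 0 ≤ s := le_trans ht (le_of_lt hs)
      have hxs : x s = baX lam x s := x_eq_baX hlam hx hs0
      have hmono : baX lam x t < baX lam x s := baX_strictMono hlam hx hs
      have := (phi_strictMono hlam) hmono
      rw [baF, hxs]
      exact mul_lt_mul_of_pos_right this (Real.exp_pos _))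
  rw [exp_tail_integral] at h
  calc baPhi lam (baX lam x t)
      = Real.exp t * (baPhi lam (baX lam x t) * Real.exp (-t)) := by
        rw [show Real.exp t * (baPhi lam (baX lam x t) * Real.exp (-t))
          = baPhi lam (baX lam x t) * (Real.exp t * Real.exp (-t)) by ring, ← Real.exp_add]
        simp
    _ < Real.exp t * ∫ s in Set.Ioi t, baF lam x s := mul_lt_mul_of_pos_left h (Real.exp_pos _)

end BAaux

namespace BAaux

variable {lam : ℝ} {x : ℝ → ℝ}

theorem baX_zero : baX lam x 0 = 0 := by simp [baX]

theorem baX_neg (hlam : 0 < lam) (hx : IsBAFixedPoint lam x) {t : ℝ} (ht : t ≤ 0) :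
    baX lam x t = t * baXD lam x 0 := by
  rw [baX]
  rw [intervalIntegral.integral_congr (g := fun _ => baXD lam x 0) fun u hu => ?_]
  · rw [intervalIntegral.integral_const, smul_eq_mul]; ring
  · rw [Set.uIcc_of_ge ht] at hu
    rw [baXD2, max_eq_right hu.2]

theorem baX_cont (hlam : 0 < lam) (hx : IsBAFixedPoint lam x) : Continuous (baX lam x) :=
  Differentiable.continuous (fun t => (hasDerivAt_baX hlam hx t).differentiableAt)

theorem baX_surj (hlam : 0 < lam) (hx : IsBAFixedPoint lam x) :
    Function.Surjective (baX lam x) := by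
  intro z
  set c0 := baXD lam x 0 with hc0def
  have hc0 : 0 < c0 := baXD_pos hlam hx le_rfl
  -- lower bound point
  set a := min (z / c0) 0 - 1 with ha
  have ha0 : a ≤ 0 := by
    rw [ha]; have := min_le_right (z / c0) 0; linarith
  have haz : baX lam x a ≤ z := by
    rw [baX_neg hlam hx ha0, ← hc0def]
    have h1 : a ≤ z / c0 := by have := min_le_left (z / c0) 0; linarith
    calc a * c0 ≤ (z / c0) * c0 := mul_le_mul_of_nonneg_right h1 hc0.le
      _ = z := by field_simp
  -- upper bound point
  have hX1 : 0 < baX lam x 1 := by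
    have := baX_strictMono hlam hx (show (0:ℝ) < 1 by norm_num)
    rwa [baX_zero] at this
  set φ1 := baPhi lam (baX lam x 1) with hφ1def
  have hφ1 : 0 < φ1 := phi_pos hlam hX1
  set b := max 1 (1 + (z - baX lam x 1) / φ1) with hb
  have hb1 : (1:ℝ) ≤ b := le_max_left _ _
  have hbz : z ≤ baX lam x b := by
    have hgrow : baX lam x 1 + (b - 1) * φ1 ≤ baX lam x b := by
      have hint : ∀ p q : ℝ, IntervalIntegrable (baXD2 lam x) volume p q :=
        fun p q => (continuous_baXD2 hlam hx).intervalIntegrable p q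
      have hsub : baX lam x b - baX lam x 1 = ∫ u in (1:ℝ)..b, baXD2 lam x u := by
        rw [baX, baX]
        exact intervalIntegral.integral_interval_sub_left (hint 0 b) (hint 0 1)
      have hmono : (∫ u in (1:ℝ)..b, (fun _ => φ1) u) ≤ ∫ u in (1:ℝ)..b, baXD2 lam x u := by
        refine intervalIntegral.integral_mono_on hb1 (intervalIntegrable_const) (hint 1 b)
          fun u hu => ?_
        have hu1 : (1:ℝ) ≤ u := hu.1
        have hu0 : (0:ℝ) ≤ u := by linarith
        have h1 : baPhi lam (baX lam x u) < baXD lam x u := phi_lt_baXD hlam hx hu0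
        have h2 : φ1 ≤ baPhi lam (baX lam x u) :=
          phi_mono hlam (baX_monotone hlam hx hu1)
        rw [baXD2, max_eq_left hu0]
        linarith
      rw [intervalIntegral.integral_const, smul_eq_mul] at hmono
      linarith [hsub, hmono]
    have : (z - baX lam x 1) / φ1 ≤ b - 1 := by
      have := le_max_right 1 (1 + (z - baX lam x 1) / φ1); linarith
    have h2 : z - baX lam x 1 ≤ (b - 1) * φ1 := by
      calc z - baX lam x 1 = ((z - baX lam x 1) / φ1) * φ1 := by field_simp
        _ ≤ (b - 1) * φ1 := mul_le_mul_of_nonneg_right this hφ1.le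
    linarith
  -- intermediate value
  have hab : a ≤ b := by linarith
  have hcont : ContinuousOn (baX lam x) (Set.uIcc a b) := (baX_cont hlam hx).continuousOn
  have hz : z ∈ Set.uIcc (baX lam x a) (baX lam x b) := by
    rw [Set.uIcc_of_le (le_trans haz hbz)]
    exact ⟨haz, hbz⟩
  obtain ⟨t, _, htz⟩ := intermediate_value_uIcc hcont hz
  exact ⟨t, htz⟩

theorem continuous_baPhi (lam : ℝ) : Continuous (baPhi lam) := by
  unfold baPhi; fun_prop

theorem hasDerivAt_baXD2 (hlam : 0 < lam) (hx : IsBAFixedPoint lam x) {t : ℝ} (ht : 0 < t) :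
    HasDerivAt (baXD2 lam x) (baXD lam x t - baPhi lam (baX lam x t)) t := by
  have hmem : Set.Ioi (0:ℝ) ∈ 𝓝 t := Ioi_mem_nhds ht
  -- the modified integrand is eventually the nice continuous function
  have hg : Continuous fun s => baPhi lam (baX lam x s) * Real.exp (-s) :=
    ((continuous_baPhi lam).comp (baX_cont hlam hx)).mul (Real.continuous_exp.comp continuous_neg)
  have heq : baFp lam x =ᶠ[𝓝 t] fun s => baPhi lam (baX lam x s) * Real.exp (-s) := by
    filter_upwards [hmem] with s hs
    rw [baFp, if_pos (le_of_lt hs)]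
    rw [baF, x_eq_baX hlam hx (le_of_lt hs)]
  have hPcont : ContinuousAt (baFp lam x) t := hg.continuousAt.congr heq.symm
  have hP : HasDerivAt (fun w => ∫ s in (0:ℝ)..w, baFp lam x s) (baFp lam x t) t :=
    intervalIntegral.integral_hasDerivAt_right
      ((baFp_integrable hlam hx).intervalIntegrable)
      ((baFp_integrable hlam hx).aestronglyMeasurable.stronglyMeasurableAtFilter)
      hPcont
  have hXDd : HasDerivAt (baXD lam x)
      (baXD lam x t - baPhi lam (baX lam x t)) t := by
    have h1 : HasDerivAt (fun w => baC lam x - ∫ s in (0:ℝ)..w, baFp lam x s)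
        (0 - baFp lam x t) t := (hasDerivAt_const t (baC lam x)).sub hP
    have h2 := (Real.hasDerivAt_exp t).mul h1
    have hee : Real.exp t * Real.exp (-t) = 1 := by rw [← Real.exp_add]; simp
    have hval : Real.exp t * (baC lam x - ∫ s in (0:ℝ)..t, baFp lam x s)
        + Real.exp t * (0 - baFp lam x t)
        = baXD lam x t - baPhi lam (baX lam x t) := by
      rw [baFp, if_pos ht.le, baF, x_eq_baX hlam hx ht.le, baXD]
      linear_combination (-(baPhi lam (baX lam x t))) * hee
    exact hval ▸ h2
  refine hXDd.congr_of_eventuallyEq ?_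
  filter_upwards [hmem] with s hs
  rw [baXD2, max_eq_left (le_of_lt hs)]

end BAaux

namespace BAaux

variable {lam : ℝ} {x : ℝ → ℝ}

theorem derivWithin_x_zero (hlam : 0 < lam) (hx : IsBAFixedPoint lam x) :
    derivWithin x (Set.Ici 0) 0 = baXD lam x 0 := by
  have h1 : Set.EqOn x (baX lam x) (Set.Ici 0) := fun t ht => x_eq_baX hlam hx ht
  rw [derivWithin_congr h1 (x_eq_baX hlam hx le_rfl)]
  have h2 := ((hasDerivAt_baX hlam hx 0).hasDerivWithinAt).derivWithin
    ((uniqueDiffOn_Ici 0) 0 Set.self_mem_Ici)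
  rwa [baXD2, max_self] at h2

theorem ba_master (hlam : 0 < lam) (hx : IsBAFixedPoint lam x) :
    ∃ F : ℝ → ℝ, Continuous F ∧ F 0 = derivWithin x (Set.Ici 0) 0 ∧
      (∀ z, 0 ≤ z → 0 < F z ∧ F z < lam ∧ baPhi lam z < F z) ∧
      (∀ z, 0 < z → HasDerivAt F (1 - baPhi lam z / F z) z) := by
  set e := StrictMono.orderIsoOfSurjective _ (baX_strictMono hlam hx) (baX_surj hlam hx) with he
  have hea : ∀ t, e t = baX lam x t := fun t => rfl
  have hXe : ∀ z, baX lam x (e.symm z) = z := fun z =>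
    StrictMono.orderIsoOfSurjective_self_symm_apply _ _ _ z
  have hinv0 : e.symm 0 = 0 := by
    have : baX lam x (e.symm 0) = baX lam x 0 := by rw [hXe, baX_zero]
    exact (baX_strictMono hlam hx).injective this
  have hinvnonneg : ∀ z, 0 ≤ z → 0 ≤ e.symm z := by
    intro z hz
    by_contra hlt
    push_neg at hlt
    have := baX_strictMono hlam hx hlt
    rw [hXe, baX_zero] at this
    linarith
  have hinvpos : ∀ z, 0 < z → 0 < e.symm z := by
    intro z hz
    rcases (hinvnonneg z hz.le).lt_or_eq with h | h
    · exact h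
    · exfalso
      have h2 := hXe z
      rw [← h, baX_zero] at h2
      linarith
  refine ⟨fun z => baXD2 lam x (e.symm z), ?_, ?_, ?_, ?_⟩
  · exact (continuous_baXD2 hlam hx).comp (OrderIso.continuous e.symm)
  · show baXD2 lam x (e.symm 0) = derivWithin x (Set.Ici 0) 0
    rw [hinv0, derivWithin_x_zero hlam hx, baXD2, max_self]
  · intro z hz
    have ht0 : 0 ≤ e.symm z := hinvnonneg z hz
    have h1 : baXD2 lam x (e.symm z) = baXD lam x (e.symm z) := by
      rw [baXD2, max_eq_left ht0]
    show 0 < baXD2 lam x (e.symm z) ∧ baXD2 lam x (e.symm z) < lam ∧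
      baPhi lam z < baXD2 lam x (e.symm z)
    rw [h1]
    refine ⟨baXD_pos hlam hx ht0, baXD_lt_lam hlam hx ht0, ?_⟩
    have := phi_lt_baXD hlam hx ht0
    rwa [hXe] at this
  · intro z hz
    set t := e.symm z with htdef
    have ht : 0 < t := hinvpos z hz
    have hXDne : baXD2 lam x t ≠ 0 := ne_of_gt (baXD2_pos hlam hx t)
    have hginv : HasDerivAt e.symm (baXD2 lam x t)⁻¹ z := by
      refine HasDerivAt.of_local_left_inverse ((OrderIso.continuous e.symm).continuousAt)
        (hasDerivAt_baX hlam hx t) hXDne ?_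
      exact Filter.Eventually.of_forall fun w => hXe w
    have hXDd : HasDerivAt (baXD2 lam x) (baXD lam x t - baPhi lam (baX lam x t)) t :=
      hasDerivAt_baXD2 hlam hx ht
    have hcomp := hXDd.comp z hginv
    have hval : (baXD lam x t - baPhi lam (baX lam x t)) * (baXD2 lam x t)⁻¹
        = 1 - baPhi lam z / baXD2 lam x (e.symm z) := by
      rw [← htdef, hXe]
      have h1 : baXD2 lam x t = baXD lam x t := by rw [baXD2, max_eq_left ht.le]
      rw [h1]
      have hne : baXD lam x t ≠ 0 := by rw [← h1]; exact hXDne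
      field_simp
    rw [hval] at hcomp
    exact hcomp

end BAaux

namespace BAaux

theorem exitInf_le {S : Set ℝ} {t : ℝ} (ht : t ∈ S) : exitInf S ≤ ENNReal.ofReal t :=
  iInf_le _ (⟨t, ht⟩ : S)

theorem exitInf_nonempty {S : Set ℝ} (h : exitInf S < ⊤) : S.Nonempty := by
  by_contra hne
  rw [Set.not_nonempty_iff_eq_empty] at hne
  subst hne
  rw [exitInf] at h
  simp at h

theorem exitInf_eq_sInf {S : Set ℝ} (hne : S.Nonempty) (hpos : ∀ t ∈ S, 0 ≤ t) :
    exitInf S = ENNReal.ofReal (sInf S) := by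
  have hsInf0 : 0 ≤ sInf S := le_csInf hne hpos
  apply le_antisymm
  · refine ENNReal.le_of_forall_pos_le_add fun ε hε _ => ?_
    obtain ⟨a, haS, halt⟩ := Real.lt_sInf_add_pos hne (by exact_mod_cast hε : (0:ℝ) < (ε:ℝ))
    calc exitInf S ≤ ENNReal.ofReal a := exitInf_le haS
      _ ≤ ENNReal.ofReal (sInf S + ε) := ENNReal.ofReal_le_ofReal halt.le
      _ = ENNReal.ofReal (sInf S) + ENNReal.ofReal ε :=
          ENNReal.ofReal_add hsInf0 (by positivity)
      _ = ENNReal.ofReal (sInf S) + ε := by rw [ENNReal.ofReal_coe_nnreal]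
  · exact le_iInf fun t => ENNReal.ofReal_le_ofReal
      (csInf_le ⟨0, fun a ha => hpos a ha⟩ t.2)

theorem stay_pos {D : ℝ → ℝ} {r : ℝ} (hc : ContinuousOn D (Set.Icc 0 r))
    (h0 : 0 < D 0)
    (hder : ∀ t, t ∈ Set.Ioo 0 r → 0 < D t → ∃ d, 0 ≤ d ∧ HasDerivAt D d t) :
    ∀ t ∈ Set.Icc 0 r, 0 < D t := by
  by_contra hcon
  push_neg at hcon
  obtain ⟨t₁, ht₁, hD₁⟩ := hcon
  set B := Set.Icc 0 r ∩ D ⁻¹' Set.Iic 0 with hB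
  have hBne : B.Nonempty := ⟨t₁, ht₁, hD₁⟩
  have hBclosed : IsClosed B := hc.preimage_isClosed_of_isClosed isClosed_Icc isClosed_Iic
  have hBbdd : BddBelow B := ⟨0, fun b hb => hb.1.1⟩
  have htB : sInf B ∈ B := hBclosed.csInf_mem hBne hBbdd
  set ts := sInf B with hts
  have hDts : D ts ≤ 0 := htB.2
  have htpos : 0 < ts := by
    rcases htB.1.1.lt_or_eq with h | h
    · exact h
    · exfalso; rw [← h] at hDts; linarith
  have hlt : ∀ u ∈ Set.Ico 0 ts, 0 < D u := by
    intro u hu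
    by_contra h
    push_neg at h
    have huB : u ∈ B := ⟨⟨hu.1, le_trans hu.2.le htB.1.2⟩, h⟩
    exact absurd (csInf_le hBbdd huB) (not_le.2 hu.2)
  have hmono : MonotoneOn D (Set.Icc 0 ts) := by
    refine monotoneOn_of_deriv_nonneg (convex_Icc 0 ts)
      (hc.mono (Set.Icc_subset_Icc le_rfl htB.1.2)) ?_ ?_
    · intro u hu
      rw [interior_Icc] at hu
      obtain ⟨d, _, hdd⟩ := hder u ⟨hu.1, lt_of_lt_of_le hu.2 htB.1.2⟩ (hlt u ⟨hu.1.le, hu.2⟩)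
      exact hdd.differentiableAt.differentiableWithinAt
    · intro u hu
      rw [interior_Icc] at hu
      obtain ⟨d, hd0, hdd⟩ := hder u ⟨hu.1, lt_of_lt_of_le hu.2 htB.1.2⟩ (hlt u ⟨hu.1.le, hu.2⟩)
      rw [hdd.deriv]; exact hd0
  have hfin : D 0 ≤ D ts := hmono ⟨le_rfl, htB.1.1⟩ ⟨htB.1.1, le_rfl⟩ htB.1.1
  linarith

end BAaux

open BAaux

/-- comparison of the BA fixed point with solutions of
y'' − y' + ψ(y) = 0 started at y(0) = 0, y'(0) > 0. -/
theorem ba_comparison {lam : ℝ} (hlam : 0 < lam) {x : ℝ → ℝ}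
    (hx : IsBAFixedPoint lam x)
    (ψ : ℝ → ℝ) (hψ0 : ψ 0 = 0) (hψnonneg : ∀ s, 0 ≤ s → 0 ≤ ψ s)
    (hψmono : StrictMonoOn ψ (Set.Ici 0))
    (hψlip : ∃ K : NNReal, LipschitzOnWith K ψ (Set.Ici 0))
    (y : ℝ → ℝ) (hyreg : ContDiffOn ℝ 2 y (Set.Ici 0))
    (hyode : ∀ t, 0 ≤ t →
      derivWithin (derivWithin y (Set.Ici 0)) (Set.Ici 0) t
        - derivWithin y (Set.Ici 0) t + ψ (y t) = 0)
    (hy0 : y 0 = 0) (hy'0 : 0 < derivWithin y (Set.Ici 0) 0) :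
    (exitInf {t : ℝ | 0 ≤ t ∧ lam ≤ derivWithin y (Set.Ici 0) t}
        < exitInf {t : ℝ | 0 ≤ t ∧ ¬(0 ≤ y t ∧ 0 ≤ derivWithin y (Set.Ici 0) t)} →
      exitInf {t : ℝ | 0 ≤ t ∧ lam ≤ derivWithin y (Set.Ici 0) t} < ⊤ →
      (∀ s, 0 ≤ s → baPhi lam s ≤ ψ s) →
      derivWithin x (Set.Ici 0) 0 ≤ derivWithin y (Set.Ici 0) 0) ∧
    (exitInf {t : ℝ | 0 < t ∧ derivWithin y (Set.Ici 0) t = baPhi lam (y t)}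
        < exitInf {t : ℝ | 0 ≤ t ∧ ¬(0 ≤ y t ∧ 0 ≤ derivWithin y (Set.Ici 0) t)} →
      exitInf {t : ℝ | 0 < t ∧ derivWithin y (Set.Ici 0) t = baPhi lam (y t)} < ⊤ →
      (∀ s, 0 ≤ s → ψ s ≤ baPhi lam s) →
      derivWithin y (Set.Ici 0) 0 ≤ derivWithin x (Set.Ici 0) 0) := by
  obtain ⟨F, hFc, hF0, hFprop, hFd⟩ := BAaux.ba_master hlam hx
  set y' := derivWithin y (Set.Ici 0) with hy'def
  have hUD : UniqueDiffOn ℝ (Set.Ici (0:ℝ)) := uniqueDiffOn_Ici 0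
  have hycont : ContinuousOn y (Set.Ici 0) := hyreg.continuousOn
  have hy'reg : ContDiffOn ℝ 1 y' (Set.Ici 0) := hyreg.derivWithin hUD (by norm_num)
  have hy'cont : ContinuousOn y' (Set.Ici 0) := hy'reg.continuousOn
  have hyd : ∀ t : ℝ, 0 < t → HasDerivAt y (y' t) t := by
    intro t ht
    have hmem : Set.Ici (0:ℝ) ∈ 𝓝 t := Ici_mem_nhds ht
    have hdiff : DifferentiableWithinAt ℝ y (Set.Ici 0) t :=
      (hyreg.differentiableOn (by norm_num)) t (le_of_lt ht)
    have h3 : y' t = deriv y t := derivWithin_of_mem_nhds hmem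
    rw [h3]
    exact (hdiff.differentiableAt hmem).hasDerivAt
  have hy'd : ∀ t : ℝ, 0 < t → HasDerivAt y' (y' t - ψ (y t)) t := by
    intro t ht
    have hmem : Set.Ici (0:ℝ) ∈ 𝓝 t := Ici_mem_nhds ht
    have hdiff : DifferentiableWithinAt ℝ y' (Set.Ici 0) t :=
      (hy'reg.differentiableOn one_ne_zero) t (le_of_lt ht)
    have h3 : derivWithin y' (Set.Ici 0) t = deriv y' t := derivWithin_of_mem_nhds hmem
    have hode := hyode t (le_of_lt ht)
    have hval : deriv y' t = y' t - ψ (y t) := by linarith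
    rw [← hval]
    exact (hdiff.differentiableAt hmem).hasDerivAt
  -- small-time positivity of y'
  have hsmall : ∃ u, 0 < u ∧ ∀ s, 0 ≤ s → s < u → 0 < y' s := by
    have hev : ∀ᶠ s in nhdsWithin 0 (Set.Ici 0), 0 < y' s :=
      (hy'cont 0 Set.self_mem_Ici).eventually (eventually_gt_nhds hy'0)
    rw [Filter.eventually_iff, mem_nhdsGE_iff_exists_Ico_subset] at hev
    obtain ⟨u, hu, hsub⟩ := hev
    exact ⟨u, hu, fun s hs0 hsu => hsub ⟨hs0, hsu⟩⟩
  -- continuity of y' through the max trick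
  have hg : Continuous fun t => y' (max t 0) :=
    hy'cont.comp_continuous (continuous_id.max continuous_const) fun t => Set.mem_Ici.2 (le_max_right _ _)
  have hgy : Continuous fun t => y (max t 0) :=
    hycont.comp_continuous (continuous_id.max continuous_const) fun t => Set.mem_Ici.2 (le_max_right _ _)
  -- shared machinery given quadrant control on [0, r]
  have hymono : ∀ r : ℝ, (∀ t ∈ Set.Icc 0 r, 0 ≤ y t ∧ 0 ≤ y' t) →
      MonotoneOn y (Set.Icc 0 r) := by
    intro r hquad
    refine monotoneOn_of_deriv_nonneg (convex_Icc 0 r)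
      (hycont.mono fun t ht => ht.1) ?_ ?_
    · intro u hu
      rw [interior_Icc] at hu
      exact (hyd u hu.1).differentiableAt.differentiableWithinAt
    · intro u hu
      rw [interior_Icc] at hu
      rw [(hyd u hu.1).deriv]
      exact (hquad u ⟨hu.1.le, hu.2.le⟩).2
  have hypos : ∀ r : ℝ, (∀ t ∈ Set.Icc 0 r, 0 ≤ y t ∧ 0 ≤ y' t) →
      ∀ t, 0 < t → t ≤ r → 0 < y t := by
    intro r hquad t ht htr
    obtain ⟨u, hu, hup⟩ := hsmall
    set m := min t u / 2 with hm
    have hm0 : 0 < m := by rw [hm]; positivity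
    have hmt : m ≤ t := by
      rw [hm]; have := min_le_left t u; linarith
    have hmu : m < u := by
      rw [hm]; have := min_le_right t u; linarith
    have hsm : StrictMonoOn y (Set.Icc 0 m) := by
      refine strictMonoOn_of_deriv_pos (convex_Icc 0 m)
        (hycont.mono fun s hs => hs.1) ?_
      intro s hs
      rw [interior_Icc] at hs
      rw [(hyd s hs.1).deriv]
      exact hup s hs.1.le (lt_of_lt_of_le hs.2 (by linarith))
    have hym : 0 < y m := by
      have := hsm (Set.left_mem_Icc.2 hm0.le) ⟨hm0.le, le_rfl⟩ hm0
      rwa [hy0] at this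
    have := hymono r hquad ⟨hm0.le, le_trans hmt htr⟩ ⟨ht.le, htr⟩ hmt
    linarith
  constructor
  · -- part (i)
    intro h1 h2 h3
    rw [← hF0]
    by_contra hcon
    push_neg at hcon
    have hSpne : Set.Nonempty {t : ℝ | 0 ≤ t ∧ lam ≤ y' t} := exitInf_nonempty h2
    have hSppos : ∀ t ∈ {t : ℝ | 0 ≤ t ∧ lam ≤ y' t}, (0:ℝ) ≤ t := fun t ht => ht.1
    set r := sInf {t : ℝ | 0 ≤ t ∧ lam ≤ y' t} with hrdef
    have hr0 : 0 ≤ r := le_csInf hSpne hSppos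
    have hSpc : IsClosed {t : ℝ | 0 ≤ t ∧ lam ≤ y' t} := by
      have hset : {t : ℝ | 0 ≤ t ∧ lam ≤ y' t}
          = Set.Ici 0 ∩ (fun t => y' (max t 0)) ⁻¹' Set.Ici lam := by
        ext t
        simp only [Set.mem_setOf_eq, Set.mem_inter_iff, Set.mem_Ici, Set.mem_preimage]
        constructor
        · rintro ⟨ht1, ht2⟩; exact ⟨ht1, by rwa [max_eq_left ht1]⟩
        · rintro ⟨ht1, ht2⟩; exact ⟨ht1, by rwa [max_eq_left ht1] at ht2⟩
      rw [hset]
      exact isClosed_Ici.inter (isClosed_Ici.preimage hg)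
    have hrSp : r ∈ {t : ℝ | 0 ≤ t ∧ lam ≤ y' t} := hSpc.csInf_mem hSpne ⟨0, hSppos⟩
    have hquad : ∀ t ∈ Set.Icc 0 r, 0 ≤ y t ∧ 0 ≤ y' t := by
      intro t ht
      by_contra hq
      have hmem : t ∈ {t : ℝ | 0 ≤ t ∧ ¬(0 ≤ y t ∧ 0 ≤ y' t)} := ⟨ht.1, hq⟩
      have hle : exitInf {t : ℝ | 0 ≤ t ∧ ¬(0 ≤ y t ∧ 0 ≤ y' t)} ≤ ENNReal.ofReal t :=
        exitInf_le hmem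
      have heq : exitInf {t : ℝ | 0 ≤ t ∧ lam ≤ y' t} = ENNReal.ofReal r :=
        exitInf_eq_sInf hSpne hSppos
      have : exitInf {t : ℝ | 0 ≤ t ∧ ¬(0 ≤ y t ∧ 0 ≤ y' t)}
          ≤ exitInf {t : ℝ | 0 ≤ t ∧ lam ≤ y' t} := by
        rw [heq]
        exact le_trans hle (ENNReal.ofReal_le_ofReal ht.2)
      exact absurd h1 (not_lt.2 this)
    -- comparison function
    have hDcont : ContinuousOn (fun t => F (y t) - y' t) (Set.Icc 0 r) :=
      ((hFc.comp_continuousOn (hycont.mono fun t ht => ht.1)).sub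
        (hy'cont.mono fun t ht => ht.1))
    have hD0 : 0 < F (y 0) - y' 0 := by rw [hy0]; linarith
    have hDpos := stay_pos hDcont hD0 ?_
    · have hDr := hDpos r ⟨hr0, le_rfl⟩
      have hyr0 : 0 ≤ y r := (hquad r ⟨hr0, le_rfl⟩).1
      have hFr := hFprop (y r) hyr0
      have hlam_le : lam ≤ y' r := hrSp.2
      linarith [hFr.2.1]
    · intro t ht hDt
      have hyt : 0 < y t := hypos r hquad t ht.1 ht.2.le
      have hq := hquad t ⟨ht.1.le, ht.2.le⟩
      have hchain : HasDerivAt (fun s => F (y s))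
          ((1 - baPhi lam (y t) / F (y t)) * y' t) t :=
        (hFd (y t) hyt).comp t (hyd t ht.1)
      have hDd : HasDerivAt (fun s => F (y s) - y' s)
          ((1 - baPhi lam (y t) / F (y t)) * y' t - (y' t - ψ (y t))) t :=
        hchain.sub (hy'd t ht.1)
      refine ⟨_, ?_, hDd⟩
      have hFyt := hFprop (y t) hyt.le
      have hphi0 : 0 ≤ baPhi lam (y t) := phi_nonneg hlam.le hq.1
      have hy'le : y' t ≤ F (y t) := by linarith
      have hratio : baPhi lam (y t) / F (y t) * y' t ≤ baPhi lam (y t) := by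
        rw [div_mul_eq_mul_div, div_le_iff₀ hFyt.1]
        calc baPhi lam (y t) * y' t ≤ baPhi lam (y t) * F (y t) :=
              mul_le_mul_of_nonneg_left hy'le hphi0
          _ = baPhi lam (y t) * F (y t) := rfl
      have hψle : baPhi lam (y t) ≤ ψ (y t) := h3 (y t) hq.1
      have hexpand : (1 - baPhi lam (y t) / F (y t)) * y' t - (y' t - ψ (y t))
          = ψ (y t) - baPhi lam (y t) / F (y t) * y' t := by ring
      rw [hexpand]
      linarith
  · -- part (ii)
    intro h1 h2 h3
    rw [← hF0]
    by_contra hcon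
    push_neg at hcon
    have hSmne : Set.Nonempty {t : ℝ | 0 < t ∧ y' t = baPhi lam (y t)} := exitInf_nonempty h2
    have hSmpos : ∀ t ∈ {t : ℝ | 0 < t ∧ y' t = baPhi lam (y t)}, (0:ℝ) ≤ t :=
      fun t ht => ht.1.le
    set r := sInf {t : ℝ | 0 < t ∧ y' t = baPhi lam (y t)} with hrdef
    have hr0 : 0 ≤ r := le_csInf hSmne hSmpos
    -- r belongs to the closed superset
    have hCclosed : IsClosed (Set.Ici 0 ∩
        {t : ℝ | y' (max t 0) = baPhi lam (y (max t 0))}) := by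
      refine isClosed_Ici.inter (isClosed_eq hg ?_)
      exact (BAaux.continuous_baPhi lam).comp hgy
    have hrC : r ∈ Set.Ici 0 ∩ {t : ℝ | y' (max t 0) = baPhi lam (y (max t 0))} := by
      have hsub : {t : ℝ | 0 < t ∧ y' t = baPhi lam (y t)} ⊆
          Set.Ici 0 ∩ {t : ℝ | y' (max t 0) = baPhi lam (y (max t 0))} := by
        rintro t ⟨ht1, ht2⟩
        refine ⟨ht1.le, ?_⟩
        show y' (max t 0) = baPhi lam (y (max t 0))
        rw [max_eq_left ht1.le]; exact ht2
      have := csInf_mem_closure hSmne ⟨0, hSmpos⟩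
      exact hCclosed.closure_subset ((closure_mono hsub) this)
    have hreq : y' r = baPhi lam (y r) := by
      have h5 : y' (max r 0) = baPhi lam (y (max r 0)) := hrC.2
      rwa [max_eq_left hrC.1] at h5
    have hrpos : 0 < r := by
      rcases hr0.lt_or_eq with h | h
      · exact h
      · exfalso
        rw [← h, hy0, BAaux.phi_zero] at hreq
        linarith
    have hquad : ∀ t ∈ Set.Icc 0 r, 0 ≤ y t ∧ 0 ≤ y' t := by
      intro t ht
      by_contra hq
      have hmem : t ∈ {t : ℝ | 0 ≤ t ∧ ¬(0 ≤ y t ∧ 0 ≤ y' t)} := ⟨ht.1, hq⟩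
      have hle : exitInf {t : ℝ | 0 ≤ t ∧ ¬(0 ≤ y t ∧ 0 ≤ y' t)} ≤ ENNReal.ofReal t :=
        exitInf_le hmem
      have heq : exitInf {t : ℝ | 0 < t ∧ y' t = baPhi lam (y t)} = ENNReal.ofReal r :=
        exitInf_eq_sInf hSmne hSmpos
      have : exitInf {t : ℝ | 0 ≤ t ∧ ¬(0 ≤ y t ∧ 0 ≤ y' t)}
          ≤ exitInf {t : ℝ | 0 < t ∧ y' t = baPhi lam (y t)} := by
        rw [heq]
        exact le_trans hle (ENNReal.ofReal_le_ofReal ht.2)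
      exact absurd h1 (not_lt.2 this)
    have hDcont : ContinuousOn (fun t => y' t - F (y t)) (Set.Icc 0 r) :=
      ((hy'cont.mono fun t ht => ht.1).sub
        (hFc.comp_continuousOn (hycont.mono fun t ht => ht.1)))
    have hD0 : 0 < y' 0 - F (y 0) := by rw [hy0]; linarith
    have hDpos := stay_pos hDcont hD0 ?_
    · have hDr := hDpos r ⟨hr0, le_rfl⟩
      have hyr0 : 0 ≤ y r := (hquad r ⟨hr0, le_rfl⟩).1
      have hFr := hFprop (y r) hyr0
      linarith [hFr.2.2, hreq]
    · intro t ht hDt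
      have hyt : 0 < y t := hypos r hquad t ht.1 ht.2.le
      have hq := hquad t ⟨ht.1.le, ht.2.le⟩
      have hchain : HasDerivAt (fun s => F (y s))
          ((1 - baPhi lam (y t) / F (y t)) * y' t) t :=
        (hFd (y t) hyt).comp t (hyd t ht.1)
      have hDd : HasDerivAt (fun s => y' s - F (y s))
          ((y' t - ψ (y t)) - (1 - baPhi lam (y t) / F (y t)) * y' t) t :=
        (hy'd t ht.1).sub hchain
      refine ⟨_, ?_, hDd⟩
      have hFyt := hFprop (y t) hyt.le
      have hphi0 : 0 ≤ baPhi lam (y t) := phi_nonneg hlam.le hq.1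
      have hy'ge : F (y t) ≤ y' t := by linarith
      have hratio : baPhi lam (y t) ≤ baPhi lam (y t) / F (y t) * y' t := by
        rw [div_mul_eq_mul_div, le_div_iff₀ hFyt.1]
        exact mul_le_mul_of_nonneg_left hy'ge hphi0
      have hψle : ψ (y t) ≤ baPhi lam (y t) := h3 (y t) hq.1
      have hexpand : (y' t - ψ (y t)) - (1 - baPhi lam (y t) / F (y t)) * y' t
          = baPhi lam (y t) / F (y t) * y' t - ψ (y t) := by ring
      rw [hexpand]
      linarith
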